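/- arXiv:1202.0679 — 2 statements merged into one kernel-verified Lean document; each statement's English description precedes it below -/
import Mathlib

section
/- A bipartite density operator ρ on H₁ ⊗ H₂ is separable if and only if there exists a convex subset S_ρ of the density operators with ρ ∈ S_ρ and (Λ∘τ)(S_ρ) = S_ρ; moreover S_ρ can be taken to be a polytope (convex hull of finitely many points). -/
open Matrix Finset
open scoped Kronecker ComplexOrder

def IsDensity {d : Type} [Fintype d] [DecidableEq d] (ρ : Matrix d d ℂ) : Prop :=
  ρ.PosSemidef ∧ ρ.trace = 1

noncomputable def ptr₂ {n m : ℕ} (ρ : Matrix (Fin n × Fin m) (Fin n × Fin m) ℂ) :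
    Matrix (Fin n) (Fin n) ℂ :=
  Matrix.of fun i j => ∑ k : Fin m, ρ (i, k) (j, k)

noncomputable def ptr₁ {n m : ℕ} (ρ : Matrix (Fin n × Fin m) (Fin n × Fin m) ℂ) :
    Matrix (Fin m) (Fin m) ℂ :=
  Matrix.of fun i j => ∑ k : Fin n, ρ (k, i) (k, j)

def SepState {n m : ℕ} (ρ : Matrix (Fin n × Fin m) (Fin n × Fin m) ℂ) : Prop :=
  ∃ (k : ℕ) (p : Fin k → ℝ) (a : Fin k → Matrix (Fin n) (Fin n) ℂ)
    (b : Fin k → Matrix (Fin m) (Fin m) ℂ),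
    (∀ i, 0 ≤ p i) ∧ (∑ i, p i) = 1 ∧ (∀ i, IsDensity (a i) ∧ IsDensity (b i)) ∧
    ρ = ∑ i, p i • (a i ⊗ₖ b i)

def Lam {n m : ℕ} (C₁ : Set (Matrix (Fin n) (Fin n) ℂ))
    (C₂ : Set (Matrix (Fin m) (Fin m) ℂ)) :
    Set (Matrix (Fin n × Fin m) (Fin n × Fin m) ℂ) :=
  convexHull ℝ {x | ∃ ρ₁ ∈ C₁, ∃ ρ₂ ∈ C₂, x = ρ₁ ⊗ₖ ρ₂}

noncomputable def LamTau {n m : ℕ} (C : Set (Matrix (Fin n × Fin m) (Fin n × Fin m) ℂ)) :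
    Set (Matrix (Fin n × Fin m) (Fin n × Fin m) ℂ) :=
  Lam (ptr₂ '' C) (ptr₁ '' C)

noncomputable def outer {d : Type} [Fintype d] (ψ : d → ℂ) : Matrix d d ℂ :=
  Matrix.of fun x y => ψ x * star (ψ y)

/-! ### Auxiliary lemmas -/

section helpers
variable {d : Type} [Fintype d] [DecidableEq d]

omit [DecidableEq d] in
lemma smul_psd {M : Matrix d d ℂ} (hM : M.PosSemidef) {c : ℝ} (hc : 0 ≤ c) :
    (c • M).PosSemidef := by
  refine posSemidef_iff_dotProduct_mulVec.mpr ⟨?_, ?_⟩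
  · unfold Matrix.IsHermitian
    rw [conjTranspose_smul, hM.1, star_trivial]
  · intro x
    rw [smul_mulVec, dotProduct_smul]
    have := hM.dotProduct_mulVec_nonneg x
    rw [Complex.real_smul]
    exact mul_nonneg (by exact_mod_cast hc) this

omit [DecidableEq d] in
lemma dot_sum (x : d → ℂ) {ι : Type*} (t : Finset ι) (f : ι → Matrix d d ℂ) :
    star x ⬝ᵥ (∑ i ∈ t, f i) *ᵥ x = ∑ i ∈ t, star x ⬝ᵥ (f i) *ᵥ x := by
  induction t using Finset.cons_induction with
  | empty => simp
  | cons i t hi ih => simp [add_mulVec, Finset.sum_cons, dotProduct_add, ih]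

omit [DecidableEq d] in
lemma sum_psd {ι : Type*} (t : Finset ι) (f : ι → Matrix d d ℂ)
    (h : ∀ i ∈ t, (f i).PosSemidef) : (∑ i ∈ t, f i).PosSemidef := by
  refine posSemidef_iff_dotProduct_mulVec.mpr ⟨?_, ?_⟩
  · unfold Matrix.IsHermitian
    rw [conjTranspose_sum]
    exact Finset.sum_congr rfl fun i hi => (h i hi).1
  · intro x
    rw [dot_sum]
    exact Finset.sum_nonneg fun i hi => (h i hi).dotProduct_mulVec_nonneg x

lemma density_sum_mem {ι : Type*} (t : Finset ι) (w : ι → ℝ) (f : ι → Matrix d d ℂ)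
    (hw : ∀ i ∈ t, 0 ≤ w i) (hw1 : ∑ i ∈ t, w i = 1)
    (hf : ∀ i ∈ t, IsDensity (f i)) : IsDensity (∑ i ∈ t, w i • f i) := by
  constructor
  · exact sum_psd t _ fun i hi => smul_psd (hf i hi).1 (hw i hi)
  · rw [trace_sum]
    have : ∀ i ∈ t, (w i • f i).trace = (w i : ℂ) := fun i hi => by
      rw [trace_smul, (hf i hi).2, Complex.real_smul, mul_one]
    rw [Finset.sum_congr rfl this]
    exact_mod_cast congrArg (Complex.ofReal) hw1

lemma convex_density : Convex ℝ {M : Matrix d d ℂ | IsDensity M} := by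
  intro x hx y hy a b ha hb hab
  have := density_sum_mem (ι := Bool) Finset.univ (fun i => if i then a else b)
    (fun i => if i then x else y)
    (by rintro (_|_) _ <;> simpa)
    (by simpa [Fintype.sum_bool] using by linarith)
    (by rintro (_|_) _ <;> simpa using ‹_›)
  simpa [Fintype.sum_bool] using this

end helpers

section h2
variable {n m : ℕ}

lemma star_ite (c : Prop) [Decidable c] (a b : ℂ) :
    star (if c then a else b) = if c then star a else star b := by
  split <;> rfl

lemma sum3_rot {α β γ M : Type*} [AddCommMonoid M] [Fintype α] [Fintype β] [Fintype γ]
    (f : α → β → γ → M) :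
    ∑ a, ∑ b, ∑ c, f a b c = ∑ c, ∑ a, ∑ b, f a b c :=
  calc ∑ a, ∑ b, ∑ c, f a b c
      = ∑ a, ∑ c, ∑ b, f a b c := Finset.sum_congr rfl fun _ _ => Finset.sum_comm
    _ = ∑ c, ∑ a, ∑ b, f a b c := Finset.sum_comm

lemma kron_conjT (A : Matrix (Fin n) (Fin n) ℂ) (B : Matrix (Fin m) (Fin m) ℂ) :
    (A ⊗ₖ B)ᴴ = Aᴴ ⊗ₖ Bᴴ := by
  ext ⟨i, k⟩ ⟨j, l⟩
  simp [conjTranspose_apply, kroneckerMap_apply, mul_comm]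

lemma kron_psd {A : Matrix (Fin n) (Fin n) ℂ} {B : Matrix (Fin m) (Fin m) ℂ}
    (hA : A.PosSemidef) (hB : B.PosSemidef) : (A ⊗ₖ B).PosSemidef := by
  exact hA.kronecker hB

lemma kron_density {A : Matrix (Fin n) (Fin n) ℂ} {B : Matrix (Fin m) (Fin m) ℂ}
    (hA : IsDensity A) (hB : IsDensity B) : IsDensity (A ⊗ₖ B) :=
  ⟨kron_psd hA.1 hB.1, by rw [trace_kronecker, hA.2, hB.2, mul_one]⟩

lemma ptr₂_kron {A : Matrix (Fin n) (Fin n) ℂ} {B : Matrix (Fin m) (Fin m) ℂ}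
    (hB : B.trace = 1) : ptr₂ (A ⊗ₖ B) = A := by
  have hs : ∑ k : Fin m, B k k = 1 := by simpa [Matrix.trace, Matrix.diag] using hB
  ext i j
  simp [ptr₂, kroneckerMap_apply, ← Finset.mul_sum, hs]

lemma ptr₁_kron {A : Matrix (Fin n) (Fin n) ℂ} {B : Matrix (Fin m) (Fin m) ℂ}
    (hA : A.trace = 1) : ptr₁ (A ⊗ₖ B) = B := by
  have hs : ∑ k : Fin n, A k k = 1 := by simpa [Matrix.trace, Matrix.diag] using hA
  ext i j
  simp [ptr₁, kroneckerMap_apply, ← Finset.sum_mul, hs]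

lemma ptr₁_eq_ptr₂ (ρ : Matrix (Fin n × Fin m) (Fin n × Fin m) ℂ) :
    ptr₁ ρ = ptr₂ (ρ.submatrix Prod.swap Prod.swap) := by
  ext i j; simp [ptr₁, ptr₂]

lemma ptr₂_density (ρ : Matrix (Fin n × Fin m) (Fin n × Fin m) ℂ) (hρ : IsDensity ρ) :
    IsDensity (ptr₂ ρ) := by
  constructor
  · refine posSemidef_iff_dotProduct_mulVec.mpr ⟨?_, ?_⟩
    · ext i j
      simp only [conjTranspose_apply, ptr₂, of_apply, star_sum]
      exact Finset.sum_congr rfl fun k _ => hρ.1.1.apply _ _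
    · intro x
      have key : star x ⬝ᵥ (ptr₂ ρ) *ᵥ x =
          ∑ k : Fin m, star (fun p : Fin n × Fin m => if p.2 = k then x p.1 else 0) ⬝ᵥ
            ρ *ᵥ (fun p : Fin n × Fin m => if p.2 = k then x p.1 else 0) := by
        simp only [dotProduct, mulVec, ptr₂, of_apply, Pi.star_apply, Fintype.sum_prod_type,
          star_ite, star_zero, ite_mul, zero_mul, mul_ite, mul_zero]
        simp only [star_ite, star_zero, ite_mul, zero_mul, mul_ite, mul_zero,
          Finset.sum_ite_eq', Finset.mem_univ, if_true, Finset.mul_sum, Finset.sum_mul]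
        exact sum3_rot fun a b c => star (x a) * (ρ (a, c) (b, c) * x b)
      rw [key]
      exact Finset.sum_nonneg fun k _ => hρ.1.dotProduct_mulVec_nonneg _
  · rw [← hρ.2]
    simp [Matrix.trace, Matrix.diag, ptr₂, Fintype.sum_prod_type]

lemma psd_swap (ρ : Matrix (Fin n × Fin m) (Fin n × Fin m) ℂ) (hρ : IsDensity ρ) :
    IsDensity (ρ.submatrix (Prod.swap : Fin m × Fin n → Fin n × Fin m) Prod.swap) := by
  constructor
  · exact hρ.1.submatrix (Equiv.prodComm (Fin m) (Fin n))
  · rw [← hρ.2]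
    simp [Matrix.trace, Matrix.diag, Fintype.sum_prod_type]
    exact Finset.sum_comm

lemma ptr₁_density (ρ : Matrix (Fin n × Fin m) (Fin n × Fin m) ℂ) (hρ : IsDensity ρ) :
    IsDensity (ptr₁ ρ) := by
  rw [ptr₁_eq_ptr₂]
  exact ptr₂_density _ (psd_swap ρ hρ)

/-! ### Linear maps -/

noncomputable def ptr₂L (n m : ℕ) :
    Matrix (Fin n × Fin m) (Fin n × Fin m) ℂ →ₗ[ℝ] Matrix (Fin n) (Fin n) ℂ where
  toFun := ptr₂
  map_add' x y := by ext i j; simp [ptr₂, Finset.sum_add_distrib]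
  map_smul' c x := by ext i j; simp [ptr₂, Finset.smul_sum]

noncomputable def ptr₁L (n m : ℕ) :
    Matrix (Fin n × Fin m) (Fin n × Fin m) ℂ →ₗ[ℝ] Matrix (Fin m) (Fin m) ℂ where
  toFun := ptr₁
  map_add' x y := by ext i j; simp [ptr₁, Finset.sum_add_distrib]
  map_smul' c x := by ext i j; simp [ptr₁, Finset.smul_sum]

noncomputable def kronRL (B : Matrix (Fin m) (Fin m) ℂ) :
    Matrix (Fin n) (Fin n) ℂ →ₗ[ℝ] Matrix (Fin n × Fin m) (Fin n × Fin m) ℂ where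
  toFun A := A ⊗ₖ B
  map_add' x y := by ext ⟨i, k⟩ ⟨j, l⟩; simp [kroneckerMap_apply, add_mul]
  map_smul' c x := by
    ext ⟨i, k⟩ ⟨j, l⟩
    simp [kroneckerMap_apply, Complex.real_smul]
    ring

noncomputable def kronLL (A : Matrix (Fin n) (Fin n) ℂ) :
    Matrix (Fin m) (Fin m) ℂ →ₗ[ℝ] Matrix (Fin n × Fin m) (Fin n × Fin m) ℂ where
  toFun B := A ⊗ₖ B
  map_add' x y := by ext ⟨i, k⟩ ⟨j, l⟩; simp [kroneckerMap_apply, mul_add]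
  map_smul' c x := by
    ext ⟨i, k⟩ ⟨j, l⟩
    simp [kroneckerMap_apply, Complex.real_smul]
    ring

/-! ### The polytope construction -/

lemma sep_polytope (ρ : Matrix (Fin n × Fin m) (Fin n × Fin m) ℂ) (h : SepState ρ) :
    ∃ F : Finset (Matrix (Fin n × Fin m) (Fin n × Fin m) ℂ),
      (∀ σ ∈ F, IsDensity σ) ∧
      ρ ∈ convexHull ℝ ((F : Set (Matrix (Fin n × Fin m) (Fin n × Fin m) ℂ))) ∧
      LamTau (convexHull ℝ ((F : Set (Matrix (Fin n × Fin m) (Fin n × Fin m) ℂ)))) =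
        convexHull ℝ ((F : Set (Matrix (Fin n × Fin m) (Fin n × Fin m) ℂ))) := by
  classical
  obtain ⟨k, p, a, b, hp, hp1, hd, hρeq⟩ := h
  set g : Fin k × Fin k → Matrix (Fin n × Fin m) (Fin n × Fin m) ℂ :=
    fun jl => a jl.1 ⊗ₖ b jl.2 with hg
  set F : Finset (Matrix (Fin n × Fin m) (Fin n × Fin m) ℂ) :=
    Finset.image g Finset.univ with hF
  have hFd : ∀ σ ∈ F, IsDensity σ := by
    intro σ hσ
    obtain ⟨jl, -, rfl⟩ := Finset.mem_image.mp hσ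
    exact kron_density (hd jl.1).1 (hd jl.2).2
  set S := convexHull ℝ ((F : Set (Matrix (Fin n × Fin m) (Fin n × Fin m) ℂ))) with hS
  have hinF : ∀ jl : Fin k × Fin k, g jl ∈ S := fun jl =>
    subset_convexHull ℝ _ (Finset.mem_coe.mpr (Finset.mem_image.mpr ⟨jl, Finset.mem_univ _, rfl⟩))
  have hmem : ρ ∈ S := by
    rw [hρeq]
    exact (convex_convexHull ℝ _).sum_mem (fun i _ => hp i) hp1 fun i _ => hinF (i, i)
  set A : Set (Matrix (Fin n) (Fin n) ℂ) :=
    (fun jl : Fin k × Fin k => a jl.1) '' Set.univ with hA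
  set B : Set (Matrix (Fin m) (Fin m) ℂ) :=
    (fun jl : Fin k × Fin k => b jl.2) '' Set.univ with hB
  have hF2 : ptr₂ '' (F : Set (Matrix (Fin n × Fin m) (Fin n × Fin m) ℂ)) = A := by
    rw [hF, Finset.coe_image, Finset.coe_univ, ← Set.image_comp]
    exact Set.image_congr fun jl _ => ptr₂_kron (hd jl.2).2.2
  have hF1 : ptr₁ '' (F : Set (Matrix (Fin n × Fin m) (Fin n × Fin m) ℂ)) = B := by
    rw [hF, Finset.coe_image, Finset.coe_univ, ← Set.image_comp]
    exact Set.image_congr fun jl _ => ptr₁_kron (hd jl.1).1.2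
  have him2 : ptr₂ '' S = convexHull ℝ A := by
    have h := (ptr₂L n m).image_convexHull
      (F : Set (Matrix (Fin n × Fin m) (Fin n × Fin m) ℂ))
    rw [show ⇑(ptr₂L n m) = ptr₂ from rfl] at h
    rw [hS, h, hF2]
  have him1 : ptr₁ '' S = convexHull ℝ B := by
    have h := (ptr₁L n m).image_convexHull
      (F : Set (Matrix (Fin n × Fin m) (Fin n × Fin m) ℂ))
    rw [show ⇑(ptr₁L n m) = ptr₁ from rfl] at h
    rw [hS, h, hF1]
  refine ⟨F, hFd, hmem, ?_⟩
  show LamTau S = S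
  rw [LamTau, Lam, him2, him1]
  apply Set.Subset.antisymm
  · refine convexHull_min ?_ (convex_convexHull ℝ _)
    rintro x ⟨ρ₁, h1, ρ₂, h2, rfl⟩
    -- each a j ⊗ₖ ρ₂ belongs to S
    have hstep : ∀ y ∈ A, y ⊗ₖ ρ₂ ∈ S := by
      rintro y ⟨jl, -, rfl⟩
      have hmem' : a jl.1 ⊗ₖ ρ₂ ∈ convexHull ℝ ((kronLL (a jl.1)) '' B) := by
        have himg := (kronLL (n := n) (m := m) (a jl.1)).image_convexHull B
        have : a jl.1 ⊗ₖ ρ₂ ∈ (kronLL (a jl.1)) '' convexHull ℝ B := ⟨ρ₂, h2, rfl⟩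
        rwa [himg] at this
      refine convexHull_min ?_ (convex_convexHull ℝ _) hmem'
      rintro z ⟨w, ⟨jl', -, rfl⟩, rfl⟩
      exact hinF (jl.1, jl'.2)
    have h1' : ρ₁ ⊗ₖ ρ₂ ∈ convexHull ℝ ((kronRL ρ₂) '' A) := by
      have himg := (kronRL (n := n) (m := m) ρ₂).image_convexHull A
      have : ρ₁ ⊗ₖ ρ₂ ∈ (kronRL ρ₂) '' convexHull ℝ A := ⟨ρ₁, h1, rfl⟩
      rwa [himg] at this
    refine convexHull_min ?_ (convex_convexHull ℝ _) h1'
    rintro z ⟨y, hy, rfl⟩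
    exact hstep y hy
  · rw [hS]
    refine convexHull_min ?_ (convex_convexHull ℝ _)
    intro x hx
    obtain ⟨jl, -, rfl⟩ := Finset.mem_image.mp hx
    refine subset_convexHull ℝ _ ?_
    exact ⟨a jl.1, subset_convexHull ℝ _ ⟨jl, Set.mem_univ _, rfl⟩,
      b jl.2, subset_convexHull ℝ _ ⟨jl, Set.mem_univ _, rfl⟩, rfl⟩

end h2

set_option maxHeartbeats 1000000 in
theorem separable_iff_mem_invariant_convex {n m : ℕ}
    (ρ : Matrix (Fin n × Fin m) (Fin n × Fin m) ℂ) (hρ : IsDensity ρ) :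
    (SepState ρ ↔
      ∃ S : Set (Matrix (Fin n × Fin m) (Fin n × Fin m) ℂ),
        Convex ℝ S ∧ (∀ σ ∈ S, IsDensity σ) ∧ ρ ∈ S ∧ LamTau S = S) ∧
    (SepState ρ →
      ∃ F : Finset (Matrix (Fin n × Fin m) (Fin n × Fin m) ℂ),
        (∀ σ ∈ F, IsDensity σ) ∧
        ρ ∈ convexHull ℝ ((F : Set (Matrix (Fin n × Fin m) (Fin n × Fin m) ℂ))) ∧
        LamTau (convexHull ℝ ((F : Set (Matrix (Fin n × Fin m) (Fin n × Fin m) ℂ)))) =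
          convexHull ℝ ((F : Set (Matrix (Fin n × Fin m) (Fin n × Fin m) ℂ)))) := by
  constructor
  · constructor
    · intro h
      obtain ⟨F, hFd, hmem, hLam⟩ := sep_polytope ρ h
      refine ⟨_, convex_convexHull ℝ _, ?_, hmem, hLam⟩
      intro σ hσ
      exact convexHull_min (fun x hx => hFd x hx) convex_density hσ
    · rintro ⟨S, hconv, hdens, hmem, hLam⟩
      rw [← hLam] at hmem
      simp only [LamTau, Lam] at hmem
      rw [mem_convexHull_iff_exists_fintype] at hmem
      obtain ⟨ι, _, w, z, hw0, hw1, hz, hsum⟩ := hmem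
      have hch : ∀ i : ι, ∃ A B, IsDensity A ∧ IsDensity B ∧ z i = A ⊗ₖ B := by
        intro i
        obtain ⟨ρ₁, hρ₁, ρ₂, hρ₂, hx⟩ := hz i
        obtain ⟨σ₁, hσ₁, rfl⟩ := hρ₁
        obtain ⟨σ₂, hσ₂, rfl⟩ := hρ₂
        exact ⟨_, _, ptr₂_density _ (hdens _ hσ₁), ptr₁_density _ (hdens _ hσ₂), hx⟩
      choose A B hA hB hzeq using hch
      set e := (Fintype.equivFin ι).symm
      refine ⟨Fintype.card ι, fun i => w (e i), fun i => A (e i), fun i => B (e i),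
        fun i => hw0 (e i), ?_, fun i => ⟨hA (e i), hB (e i)⟩, ?_⟩
      · rw [Equiv.sum_comp e w]; exact hw1
      · rw [← hsum]
        rw [← Equiv.sum_comp e (fun i => w i • z i)]
        refine Finset.sum_congr rfl fun i _ => ?_
        rw [hzeq (e i)]
  · intro h
    exact sep_polytope ρ h
end

section
/- If ρ is an entangled pure state on H₁ ⊗ H₂ (a rank-one projection that is not a product state), then its partial trace tr₂ ρ is a mixed state, i.e., (tr₂ ρ)² ≠ tr₂ ρ. -/
open Matrix Finset
open scoped Kronecker ComplexOrder

/-- Trace of a Hermitian matrix equals the sum of eigenvalues. -/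
lemma trace_eq_sum_eig {N : Type*} [Fintype N] [DecidableEq N] {A : Matrix N N ℂ}
    (hA : A.IsHermitian) : A.trace = ∑ i, (hA.eigenvalues i : ℂ) := by
  conv_lhs => rw [hA.spectral_theorem, Unitary.conjStarAlgAut_apply]
  rw [Matrix.trace_mul_cycle,
    (Matrix.mem_unitaryGroup_iff').mp (hA.eigenvectorUnitary).2, Matrix.one_mul,
    Matrix.trace_diagonal]
  rfl

/-- An idempotent PSD matrix with trace one is a rank-one outer product. -/
lemma idem_trace_one_outer {N : Type*} [Fintype N] [DecidableEq N] {A : Matrix N N ℂ}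
    (hA : A.IsHermitian) (hidem : A * A = A) (htr : A.trace = 1) :
    ∃ u : N → ℂ, A = Matrix.of fun i j => u i * star (u j) := by
  set U : Matrix N N ℂ := (hA.eigenvectorUnitary : Matrix N N ℂ)
  set lam := hA.eigenvalues
  have hUU : star U * U = 1 := (Matrix.mem_unitaryGroup_iff').mp (hA.eigenvectorUnitary).2
  have hUU' : U * star U = 1 := (Matrix.mem_unitaryGroup_iff).mp (hA.eigenvectorUnitary).2
  have hdiag : star U * A * U = Matrix.diagonal (((fun i => (lam i : ℂ)) : N → ℂ)) :=
    by have h := hA.conjStarAlgAut_star_eigenvectorUnitary; rw [Unitary.conjStarAlgAut_star_apply] at h; exact h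
  -- eigenvalues are idempotent
  have hD : (Matrix.diagonal (((fun i => (lam i : ℂ)) : N → ℂ))) * (Matrix.diagonal (((fun i => (lam i : ℂ)) : N → ℂ)))
      = Matrix.diagonal (((fun i => (lam i : ℂ)) : N → ℂ)) := by
    rw [← hdiag]
    calc (star U * A * U) * (star U * A * U) = star U * (A * (U * star U) * A) * U := by
          simp only [Matrix.mul_assoc]
      _ = star U * (A * A) * U := by rw [hUU']; simp [Matrix.mul_assoc]
      _ = star U * A * U := by rw [hidem, Matrix.mul_assoc]
  have hlam : ∀ i, lam i = 0 ∨ lam i = 1 := by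
    intro i
    have h : ((lam i : ℂ)) * (lam i : ℂ) = (lam i : ℂ) := by
      simpa using congrFun (congrFun hD i) i
    have h' : lam i * lam i = lam i := by exact_mod_cast h
    have h2 : lam i * (lam i - 1) = 0 := by ring_nf; linarith
    rcases mul_eq_zero.mp h2 with h3 | h3
    · exact Or.inl h3
    · exact Or.inr (by linarith)
  have hsum : ∑ i, lam i = 1 := by
    have h1 := trace_eq_sum_eig hA
    rw [htr] at h1
    have : ((∑ i, lam i : ℝ) : ℂ) = 1 := by push_cast; exact h1.symm ▸ rfl
    exact_mod_cast this
  -- there is some i₀ with eigenvalue 1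
  have hex : ∃ i₀, lam i₀ = 1 := by
    by_contra hno
    push_neg at hno
    have : ∀ i, lam i = 0 := fun i => (hlam i).resolve_right (hno i)
    simp [this] at hsum
  obtain ⟨i₀, hi₀⟩ := hex
  -- all other eigenvalues are zero
  have hzero : ∀ j, j ≠ i₀ → lam j = 0 := by
    intro j hj
    by_contra h0
    have hj1 : lam j = 1 := (hlam j).resolve_left h0
    have hge : (2:ℝ) ≤ ∑ i, lam i := by
      have : ∑ i ∈ {i₀, j}, lam i ≤ ∑ i, lam i := by
        apply Finset.sum_le_sum_of_subset_of_nonneg (Finset.subset_univ _)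
        intro i _ _
        rcases hlam i with h | h <;> simp [h]
      rw [Finset.sum_pair (Ne.symm hj), hi₀, hj1] at this
      linarith
    rw [hsum] at hge
    norm_num at hge
  refine ⟨fun i => U i i₀, ?_⟩
  have hAeq : A = U * Matrix.diagonal (((fun i => (lam i : ℂ)) : N → ℂ)) * star U := by have h := hA.spectral_theorem; rw [Unitary.conjStarAlgAut_apply] at h; exact h
  ext i j
  rw [hAeq]
  simp only [Matrix.mul_apply, Matrix.diagonal_apply, Matrix.of_apply, mul_ite, mul_zero,
    Finset.sum_ite_eq, Finset.sum_ite_eq', Finset.mem_univ, if_true]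
  rw [Finset.sum_eq_single i₀]
  · simp [hi₀, Matrix.star_apply]
  · intro b _ hb; simp [hzero b hb]
  · simp

theorem entangled_pure_has_mixed_marginal {n m : ℕ}
    (ψ : Fin n × Fin m → ℂ) (hψ : ∑ x, Complex.normSq (ψ x) = 1)
    (hent : ¬ ∃ (φ₁ : Fin n → ℂ) (φ₂ : Fin m → ℂ), ψ = fun p => φ₁ p.1 * φ₂ p.2) :
    (ptr₂ (outer ψ)) * (ptr₂ (outer ψ)) ≠ ptr₂ (outer ψ) := by
  intro hidem
  set M : Matrix (Fin n) (Fin m) ℂ := Matrix.of fun i k => ψ (i, k) with hM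
  have hA : ptr₂ (outer ψ) = M * Mᴴ := by
    ext i j
    simp [ptr₂, outer, Matrix.mul_apply, hM, Matrix.conjTranspose_apply]
  set A : Matrix (Fin n) (Fin n) ℂ := M * Mᴴ with hAdef
  rw [hA] at hidem
  have hherm : A.IsHermitian := Matrix.isHermitian_mul_conjTranspose_self M
  have htr : A.trace = 1 := by
    rw [← hA]
    have : (ptr₂ (outer ψ)).trace = ∑ i : Fin n, ∑ k : Fin m, (Complex.normSq (ψ (i,k)) : ℂ) := by
      simp [Matrix.trace, Matrix.diag, ptr₂, outer, Complex.mul_conj]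
    rw [this, ← Complex.ofReal_one, ← hψ]
    rw [← Finset.sum_product']
    push_cast
    rw [Finset.sum_congr rfl (fun x _ => rfl)]
    rfl
  obtain ⟨u, hu⟩ := idem_trace_one_outer hherm hidem htr
  -- show A * M = M
  have hAM : A * M = M := by
    have hBB : (A * M - M) * (A * M - M)ᴴ = 0 := by
      have hAH : Aᴴ = A := hherm
      simp only [Matrix.conjTranspose_sub, Matrix.conjTranspose_mul, hAH]
      have hMMH : M * Mᴴ = A := hAdef.symm
      calc (A * M - M) * (Mᴴ * A - Mᴴ)
          = A * (M * Mᴴ) * A - A * (M * Mᴴ) - M * Mᴴ * A + M * Mᴴ := by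
            rw [Matrix.sub_mul, Matrix.mul_sub, Matrix.mul_sub]
            simp only [Matrix.mul_assoc]
            abel
        _ = A * A * A - A * A - A * A + A := by rw [hMMH]
        _ = 0 := by rw [hidem, hidem]; abel
    exact sub_eq_zero.mp (Matrix.self_mul_conjTranspose_eq_zero.mp hBB)
  -- conclude ψ factors
  apply hent
  refine ⟨u, fun k => ∑ j, star (u j) * ψ (j, k), ?_⟩
  funext p
  obtain ⟨i, k⟩ := p
  have := congrFun (congrFun hAM i) k
  rw [hu] at this
  simp only [Matrix.mul_apply, Matrix.of_apply, hM] at this ⊢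
  rw [← this]
  rw [Finset.mul_sum]
  exact Finset.sum_congr rfl fun j _ => by ring
end
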